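/- Under the same hypotheses (P = (t₁|t₂|n₀) invertible, n₀ unit orthogonal to t₁, t₂; U := (m₁|m₂|n₀)·P⁻¹ ∈ Sym⁺(3); I_m♭ = (m₁|m₂|0)ᵀ(m₁|m₂|0); II_m♭ = -(m₁|m₂|0)ᵀ(ν₁|ν₂|0); II_{y₀}♭ = -(t₁|t₂|0)ᵀ(ν₁|ν₂|0)), Acharya's bending tensor R̃ := -[P⁻ᵀ·II_m♭·P⁻¹ - √(P⁻ᵀ·I_m♭·P⁻¹)·P⁻ᵀ·II_{y₀}♭·P⁻¹] equals the zero matrix, where √ denotes the unique positive semidefinite square root. -/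

import Mathlib

open Matrix

/-- The 3×3 matrix with columns `a`, `b`, `c`. -/
def col3 (a b c : Fin 3 → ℝ) : Matrix (Fin 3) (Fin 3) ℝ :=
  Matrix.of fun i j => ![a, b, c] j i

section
open scoped ComplexOrder

/-- The positive semidefinite square root of a positive semidefinite matrix, as
`Matrix.PosSemidef.sqrt` was defined in Mathlib of December 2024 (since removed). -/
noncomputable def posSemidefSqrtOld {n 𝕜 : Type*} [Fintype n] [DecidableEq n] [RCLike 𝕜]
    {A : Matrix n n 𝕜} (hA : A.PosSemidef) : Matrix n n 𝕜 :=
  hA.1.eigenvectorUnitary.1 * diagonal ((↑) ∘ (√·) ∘ hA.1.eigenvalues) *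
    (star hA.1.eigenvectorUnitary : Matrix n n 𝕜)

end

open scoped MatrixOrder in
theorem posSemidefSqrtOld_eq_of_sq {A S : Matrix (Fin 3) (Fin 3) ℝ} (hA : A.PosSemidef)
    (hS : S.PosSemidef) (h : S ^ 2 = A) : posSemidefSqrtOld hA = S := by
  have h1 : CFC.sqrt A = S := CFC.sqrt_unique (by rw [← sq, h]) hS.nonneg
  rw [← h1, CFC.sqrt_eq_cfc, cfc_nnreal_eq_real _ A, hA.1.cfc_eq, IsHermitian.cfc,
    Unitary.conjStarAlgAut_apply, posSemidefSqrtOld]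
  congr 3
  funext i
  simp [max_eq_left (hA.eigenvalues_nonneg i)]

/-- Acharya's bending tensor
`R̃ = -[P⁻ᵀ II_m♭ P⁻¹ - √(P⁻ᵀ I_m♭ P⁻¹) · P⁻ᵀ II_{y₀}♭ P⁻¹]`
vanishes for a pure elastic stretch that leaves the unit normal unaltered. -/
theorem acharya_bending_vanishes (t₁ t₂ n₀ m₁ m₂ ν₁ ν₂ : Fin 3 → ℝ)
    (P U : Matrix (Fin 3) (Fin 3) ℝ)
    (hn : n₀ ⬝ᵥ n₀ = 1) (h1 : n₀ ⬝ᵥ t₁ = 0) (h2 : n₀ ⬝ᵥ t₂ = 0)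
    (hPdef : P = col3 t₁ t₂ n₀) (hP : IsUnit P.det)
    (hU : U = col3 m₁ m₂ n₀ * P⁻¹) (hUpd : U.PosDef) :
    ∀ h : ((P⁻¹)ᵀ * ((col3 m₁ m₂ 0)ᵀ * col3 m₁ m₂ 0) * P⁻¹).PosSemidef,
      -((P⁻¹)ᵀ * (-((col3 m₁ m₂ 0)ᵀ * col3 ν₁ ν₂ 0)) * P⁻¹ -
          posSemidefSqrtOld h * ((P⁻¹)ᵀ * (-((col3 t₁ t₂ 0)ᵀ * col3 ν₁ ν₂ 0)) * P⁻¹)) = 0 := by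
  intro h
  set M := col3 m₁ m₂ 0 with hM
  set T := col3 t₁ t₂ 0 with hT
  set N := col3 ν₁ ν₂ 0 with hN
  set E := col3 0 0 n₀ with hE
  set Q : Matrix (Fin 3) (Fin 3) ℝ := vecMulVec n₀ n₀ with hQ
  have hQsym : Qᵀ = Q := by
    ext i j; simp [hQ, vecMulVec_apply, mul_comm]
  have hPP : P * P⁻¹ = 1 := mul_nonsing_inv P hP
  have hPP' : P⁻¹ * P = 1 := nonsing_inv_mul P hP
  -- Q * P = E
  have hQP : Q * P = E := by
    simp only [dotProduct, Fin.sum_univ_three] at hn h1 h2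
    ext i j
    fin_cases j <;>
      simp [hQ, hPdef, hE, Matrix.mul_apply, Fin.sum_univ_three, col3, vecMulVec_apply]
    · linear_combination n₀ i * h1
    · linear_combination n₀ i * h2
    · linear_combination n₀ i * hn
  have hEPinv : E * P⁻¹ = Q := by
    calc E * P⁻¹ = Q * P * P⁻¹ := by rw [hQP]
    _ = Q * (P * P⁻¹) := by rw [Matrix.mul_assoc]
    _ = Q := by rw [hPP, Matrix.mul_one]
  have hSplit : col3 m₁ m₂ n₀ = M + E := by
    ext i j; fin_cases j <;> simp [hM, hE, col3]
  have hPsplit : P = T + E := by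
    rw [hPdef]; ext i j; fin_cases j <;> simp [hT, hE, col3]
  have hMPinv : M * P⁻¹ = U - Q := by
    rw [hU, hSplit, Matrix.add_mul, hEPinv]; abel
  have hTPinv : T * P⁻¹ = 1 - Q := by
    have : T = P - E := by rw [hPsplit]; abel
    rw [this, Matrix.sub_mul, hEPinv, hPP]
  have hUsym : Uᵀ = U := hUpd.isHermitian.eq
  -- U * Q = Q
  have hF : P * col3 0 0 (fun i => if i = 2 then 1 else 0) = E := by
    ext i j; fin_cases j <;>
      simp [hE, col3, Matrix.mul_apply, Fin.sum_univ_three, hPdef]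
  have hUQ : U * Q = Q := by
    set F := col3 0 0 (fun i : Fin 3 => if i = 2 then 1 else 0) with hFdef
    have hPinvE : P⁻¹ * E = F := by
      calc P⁻¹ * E = P⁻¹ * (P * F) := by rw [hF]
      _ = (P⁻¹ * P) * F := by rw [Matrix.mul_assoc]
      _ = F := by rw [hPP', Matrix.one_mul]
    have hQEE : Q = E * Eᵀ := by
      ext i j; simp [hQ, hE, col3, Matrix.mul_apply, Fin.sum_univ_three, vecMulVec_apply]
    have hMEF : (M + E) * F = E := by
      ext i j; fin_cases j <;>
        simp [hM, hE, hFdef, col3, Matrix.mul_apply, Fin.sum_univ_three]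
    calc U * Q = col3 m₁ m₂ n₀ * P⁻¹ * (E * Eᵀ) := by rw [hU, hQEE]
    _ = col3 m₁ m₂ n₀ * (P⁻¹ * E) * Eᵀ := by simp only [Matrix.mul_assoc]
    _ = (M + E) * F * Eᵀ := by rw [hPinvE, hSplit]
    _ = E * Eᵀ := by rw [hMEF]
    _ = Q := hQEE.symm
  have hQU : Q * U = Q := by
    have := congrArg Matrix.transpose hUQ
    rwa [Matrix.transpose_mul, hUsym, hQsym] at this
  have hQQ : Q * Q = Q := by
    ext i j
    simp only [dotProduct, Fin.sum_univ_three] at hn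
    simp [hQ, Matrix.mul_apply, Fin.sum_univ_three, vecMulVec_apply]
    linear_combination (n₀ i * n₀ j) * hn
  -- Q * M = 0
  have hQM : Q * M = 0 := by
    have h0 : Q * M * P⁻¹ = 0 := by
      have : Q * (M * P⁻¹) = Q * U - Q * Q := by rw [hMPinv, Matrix.mul_sub]
      rw [← Matrix.mul_assoc] at this
      rw [this, hQU, hQQ, sub_self]
    calc Q * M = Q * M * (P⁻¹ * P) := by rw [hPP', Matrix.mul_one]
    _ = Q * M * P⁻¹ * P := by simp only [Matrix.mul_assoc]
    _ = 0 := by rw [h0, Matrix.zero_mul]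
  set S := U - Q with hS
  have hSsym : Sᵀ = S := by rw [hS, Matrix.transpose_sub, hUsym, hQsym]
  have hSfactor : S = (1 - Q) * U * (1 - Q) := by
    rw [hS]
    simp only [Matrix.sub_mul, Matrix.mul_sub, Matrix.one_mul, Matrix.mul_one, hQU, hUQ, hQQ]
    abel
  have hSpsd : S.PosSemidef := by
    rw [hSfactor]
    have h1Q : (1 - Q : Matrix (Fin 3) (Fin 3) ℝ)ᴴ = 1 - Q := by
      simp [Matrix.conjTranspose_sub, hQ]
    have := hUpd.posSemidef.conjTranspose_mul_mul_same (1 - Q)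
    rwa [h1Q] at this
  have hSeq : S = (P⁻¹)ᵀ * Mᵀ := by
    rw [← hSsym, ← hMPinv, Matrix.transpose_mul]
  have hSsq : S ^ 2 = (P⁻¹)ᵀ * (Mᵀ * M) * P⁻¹ := by
    calc S ^ 2 = S * S := sq S
    _ = ((P⁻¹)ᵀ * Mᵀ) * (M * P⁻¹) := by rw [hMPinv, ← hSeq]
    _ = (P⁻¹)ᵀ * (Mᵀ * M) * P⁻¹ := by simp only [Matrix.mul_assoc]
  have hsqrt : posSemidefSqrtOld h = S := posSemidefSqrtOld_eq_of_sq h hSpsd hSsq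
  -- final computation
  have hSPT : S * ((P⁻¹)ᵀ * Tᵀ) = (P⁻¹)ᵀ * Mᵀ := by
    have hTPM : T * (P⁻¹ * M) = M := by
      rw [← Matrix.mul_assoc, hTPinv, Matrix.sub_mul, Matrix.one_mul, hQM, sub_zero]
    calc S * ((P⁻¹)ᵀ * Tᵀ) = (P⁻¹)ᵀ * (Mᵀ * ((P⁻¹)ᵀ * Tᵀ)) := by
          rw [hSeq]; simp only [Matrix.mul_assoc]
    _ = (P⁻¹)ᵀ * (T * (P⁻¹ * M))ᵀ := by
          simp only [Matrix.transpose_mul]; simp only [Matrix.mul_assoc]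
    _ = (P⁻¹)ᵀ * Mᵀ := by rw [hTPM]
  rw [hsqrt]
  have : S * ((P⁻¹)ᵀ * (-(Tᵀ * N)) * P⁻¹) = (P⁻¹)ᵀ * (-(Mᵀ * N)) * P⁻¹ := by
    calc S * ((P⁻¹)ᵀ * (-(Tᵀ * N)) * P⁻¹)
        = -(S * ((P⁻¹)ᵀ * Tᵀ) * (N * P⁻¹)) := by
          simp only [Matrix.mul_neg, Matrix.neg_mul, Matrix.mul_assoc]
    _ = -((P⁻¹)ᵀ * Mᵀ * (N * P⁻¹)) := by rw [hSPT]
    _ = (P⁻¹)ᵀ * (-(Mᵀ * N)) * P⁻¹ := by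
          simp only [Matrix.mul_neg, Matrix.neg_mul, Matrix.mul_assoc]
  rw [this]; abel
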